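/- For a prime p and weight γ > 0, define r_{p,γ}(0) = 1 + γ/3 and, for k > 0 with base-p expansion k = κ_{a-1}p^{a-1} + ⋯ + κ_1 p + κ_0 where κ_{a-1} ≠ 0, define r_{p,γ}(k) = (γ/(2p^{2a}))(1/sin²(κ_{a-1}π/p) − 1/3). Then the infinite series ∑_{k=0}^∞ r_{p,γ}(k) converges and equals 1 + γ/2. -/

import Mathlib

open Finset Filter Topology Complex


lemma sum_id_c (n : ℕ) : ∑ i ∈ range n, (i : ℂ) = n * (n - 1) / 2 := by
  induction n with
  | zero => simp
  | succ n ih => rw [Finset.sum_range_succ, ih]; push_cast; ring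

lemma sum_sq_c (n : ℕ) : ∑ i ∈ range n, (i : ℂ)^2 = n * (n - 1) * (2*n - 1) / 6 := by
  induction n with
  | zero => simp
  | succ n ih => rw [Finset.sum_range_succ, ih]; push_cast; ring

lemma geom_weighted (z : ℂ) (n : ℕ) :
    (1 - z) * ∑ j ∈ range n, (j : ℂ) * z ^ j
      = (∑ j ∈ range n, z ^ j) - 1 - ((n:ℂ) - 1) * z ^ n := by
  induction n with
  | zero => simp
  | succ n ih =>
    rw [Finset.sum_range_succ, Finset.sum_range_succ (f := fun j => z ^ j), mul_add, ih]
    push_cast; ring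

lemma inv_one_sub (z : ℂ) (n : ℕ) (hn : (n:ℂ) ≠ 0) (hz : z ^ n = 1) (h1 : z ≠ 1) :
    1 / (1 - z) = -(1/n) * ∑ j ∈ range n, (j : ℂ) * z ^ j := by
  have hgeom : ∑ j ∈ range n, z ^ j = 0 := by
    rw [geom_sum_eq h1, hz, sub_self, zero_div]
  have h := geom_weighted z n
  rw [hgeom, hz] at h
  have h1' : (1:ℂ) - z ≠ 0 := sub_ne_zero_of_ne (Ne.symm h1)
  have hW : (∑ j ∈ range n, (j:ℂ) * z^j) = -n / (1-z) := by
    rw [eq_div_iff h1']; linear_combination h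
  rw [hW]; field_simp

lemma sin_sq_eq (θ : ℂ) :
    Complex.sin θ ^ 2 = -(1 - Complex.exp (2 * θ * I))^2 / (4 * Complex.exp (2 * θ * I)) := by
  have he : Complex.exp (θ * I) ≠ 0 := Complex.exp_ne_zero _
  have h2 : Complex.exp (2 * θ * I) = Complex.exp (θ * I) ^ 2 := by
    rw [sq, ← Complex.exp_add]; ring_nf
  have hneg : Complex.exp (-θ * I) = (Complex.exp (θ * I))⁻¹ := by
    rw [← Complex.exp_neg]; ring_nf
  rw [Complex.sin, h2, hneg]
  field_simp
  ring_nf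
  rw [Complex.I_sq]
  ring

lemma orth (n : ℕ) (hn : 2 ≤ n) (m : ℕ) :
    ∑ κ ∈ range n, Complex.exp (2 * Real.pi * I / n) ^ (m * κ)
      = if n ∣ m then (n:ℂ) else 0 := by
  set ζ := Complex.exp (2 * Real.pi * I / n) with hζ
  have hprim : IsPrimitiveRoot ζ n := Complex.isPrimitiveRoot_exp n (by omega)
  have hζn : ζ ^ n = 1 := hprim.pow_eq_one
  simp_rw [pow_mul]
  by_cases h : n ∣ m
  · have : ζ ^ m = 1 := by
      obtain ⟨c, rfl⟩ := h
      rw [pow_mul, hζn, one_pow]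
    simp [this, h]
  · have hne : ζ ^ m ≠ 1 := fun hc => h (hprim.pow_eq_one_iff_dvd m |>.mp hc)
    rw [geom_sum_eq hne, ← pow_mul, mul_comm m n, pow_mul, hζn, one_pow, sub_self, zero_div,
      if_neg h]

lemma sum_csc_sq_complex (n : ℕ) (hn : 2 ≤ n) :
    ∑ κ ∈ Finset.Ico 1 n, 1 / Complex.sin (κ * Real.pi / n) ^ 2 = ((n:ℂ)^2 - 1) / 3 := by
  set ζ := Complex.exp (2 * Real.pi * I / n) with hζ
  have hn0 : (n:ℂ) ≠ 0 := Nat.cast_ne_zero.mpr (by omega)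
  have hprim : IsPrimitiveRoot ζ n := Complex.isPrimitiveRoot_exp n (by omega)
  have hζn : ζ ^ n = 1 := hprim.pow_eq_one
  have hκsum : ∀ m : ℕ, ∑ κ ∈ Finset.Ico 1 n, ζ ^ (m * κ) = (if n ∣ m then (n:ℂ) else 0) - 1 := by
    intro m
    have h := orth n hn m
    rw [range_eq_Ico, Finset.sum_eq_sum_Ico_succ_bot (by omega : 0 < n)] at h
    rw [mul_zero, pow_zero] at h
    rw [show (0+1) = 1 from rfl] at h
    linear_combination h
  set W : ℕ → ℂ := fun κ => ∑ j ∈ range n, (j:ℂ) * (ζ^κ)^j with hWdef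
  have hSA : ∑ κ ∈ Finset.Ico 1 n, W κ = -((n:ℂ)*(n-1)/2) := by
    simp only [hWdef]
    have hrw : ∀ κ ∈ Finset.Ico 1 n, ∑ j ∈ range n, (j:ℂ) * (ζ^κ)^j
        = ∑ j ∈ range n, (j:ℂ) * ζ^(j*κ) := by
      intro κ _
      refine Finset.sum_congr rfl fun j _ => ?_
      rw [mul_comm j κ, pow_mul]
    rw [Finset.sum_congr rfl hrw, Finset.sum_comm]
    have : ∀ j ∈ range n, ∑ κ ∈ Finset.Ico 1 n, (j:ℂ) * ζ^(j*κ) = -(j:ℂ) := by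
      intro j hj
      rw [← Finset.mul_sum, hκsum j]
      rcases Nat.eq_zero_or_pos j with rfl | hjpos
      · simp
      · rw [if_neg fun hd => absurd (Nat.eq_zero_of_dvd_of_lt hd (mem_range.mp hj)) (by omega)]
        ring
    rw [Finset.sum_congr rfl this, Finset.sum_neg_distrib, sum_id_c]
  have hSB : ∑ κ ∈ Finset.Ico 1 n, (W κ)^2
      = (n:ℂ)*((n:ℂ)*((n:ℂ)^2-1)/6) - ((n:ℂ)*((n:ℂ)-1)/2)^2 := by
    have hWsq : ∀ κ ∈ Finset.Ico 1 n, (W κ)^2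
        = ∑ i ∈ range n, ∑ j ∈ range n, (i:ℂ)*(j:ℂ) * ζ^((i+j)*κ) := by
      intro κ _
      rw [hWdef]
      simp only
      rw [sq, Finset.sum_mul_sum]
      refine Finset.sum_congr rfl fun i _ => Finset.sum_congr rfl fun j _ => ?_
      rw [show (i+j)*κ = κ*i + κ*j from by ring, pow_add, pow_mul, pow_mul]
      ring
    rw [Finset.sum_congr rfl hWsq, Finset.sum_comm]
    have hswap : ∀ i ∈ range n, ∑ κ ∈ Finset.Ico 1 n, ∑ j ∈ range n, (i:ℂ)*(j:ℂ) * ζ^((i+j)*κ)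
        = ∑ j ∈ range n, ((i:ℂ)*(j:ℂ)*(if n ∣ i + j then (n:ℂ) else 0) - (i:ℂ)*(j:ℂ)) := by
      intro i _
      rw [Finset.sum_comm]
      refine Finset.sum_congr rfl fun j _ => ?_
      rw [← Finset.mul_sum, hκsum (i+j)]
      ring
    rw [Finset.sum_congr rfl hswap]
    have hsplit : ∀ i ∈ range n,
        ∑ j ∈ range n, ((i:ℂ)*(j:ℂ)*(if n ∣ i + j then (n:ℂ) else 0) - (i:ℂ)*(j:ℂ))
        = (i:ℂ)*((n:ℂ)-(i:ℂ))*(n:ℂ) - (i:ℂ) * ((n:ℂ)*((n:ℂ)-1)/2) := by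
      intro i hi
      have hi' := mem_range.mp hi
      rw [Finset.sum_sub_distrib]
      have h1 : ∑ j ∈ range n, (i:ℂ)*(j:ℂ)*(if n ∣ i + j then (n:ℂ) else 0)
          = (i:ℂ)*((n:ℂ)-(i:ℂ))*(n:ℂ) := by
        rw [Finset.sum_eq_single (n - i)]
        · rcases Nat.eq_zero_or_pos i with rfl | hipos
          · simp
          · have hd : n ∣ i + (n - i) := by
              have : i + (n - i) = n := by omega
              rw [this]
            rw [if_pos hd]
            rw [Nat.cast_sub hi'.le]
        · intro j hj hjne
          have hj' := mem_range.mp hj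
          by_cases hd : n ∣ i + j
          · obtain ⟨c, hc⟩ := hd
            have hc2 : c < 2 := by nlinarith
            interval_cases c
            · have : i = 0 := by omega
              simp [this]
            · exact absurd (by omega : j = n - i) hjne
          · simp [hd]
        · intro h
          have : i = 0 := by
            rw [mem_range] at h
            omega
          simp [this]
      have h2 : ∑ j ∈ range n, (i:ℂ)*(j:ℂ) = (i:ℂ) * ((n:ℂ)*((n:ℂ)-1)/2) := by
        rw [← Finset.mul_sum, sum_id_c]
      rw [h1, h2]
    rw [Finset.sum_congr rfl hsplit, Finset.sum_sub_distrib]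
    have h3 : ∑ i ∈ range n, (i:ℂ)*((n:ℂ)-(i:ℂ))*(n:ℂ)
        = (n:ℂ) * ((n:ℂ) * ((n:ℂ)*((n:ℂ)-1)/2) - ((n:ℂ)*((n:ℂ)-1)*(2*(n:ℂ)-1)/6)) := by
      have e1 : ∑ i ∈ range n, (i:ℂ)*((n:ℂ)-(i:ℂ))*(n:ℂ)
          = ∑ i ∈ range n, ((n:ℂ)*((n:ℂ)*(i:ℂ)) - (n:ℂ)*(i:ℂ)^2) :=
        Finset.sum_congr rfl fun i _ => by ring
      rw [e1, Finset.sum_sub_distrib]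
      simp only [← Finset.mul_sum]
      rw [sum_id_c, sum_sq_c]
      ring
    rw [h3, ← Finset.sum_mul, sum_id_c]
    ring
  -- pointwise identity
  have hpoint : ∀ κ ∈ Finset.Ico 1 n, 1 / Complex.sin (κ * Real.pi / n) ^ 2
      = -(4/(n:ℂ))*W κ - (4/(n:ℂ)^2)*(W κ)^2 := by
    intro κ hκ
    obtain ⟨h1κ, hκn⟩ := Finset.mem_Ico.mp hκ
    have hzκ : Complex.exp (2 * ((κ:ℂ) * Real.pi / n) * I) = ζ^κ := by
      rw [hζ, ← Complex.exp_nat_mul]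
      congr 1
      ring
    have hz1 : ζ^κ ≠ 1 := hprim.pow_ne_one_of_pos_of_lt (by omega) hκn
    have hz0 : ζ^κ ≠ 0 := pow_ne_zero _ (Complex.exp_ne_zero _)
    have hu : (1:ℂ) - ζ^κ ≠ 0 := sub_ne_zero_of_ne (Ne.symm hz1)
    have hpow : (ζ^κ)^n = 1 := by
      rw [← pow_mul, mul_comm, pow_mul, hζn, one_pow]
    have hWκ : 1 / (1 - ζ^κ) = -(1/(n:ℂ)) * W κ := inv_one_sub (ζ^κ) n hn0 hpow hz1
    have hsin := sin_sq_eq ((κ:ℂ) * Real.pi / n)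
    rw [hzκ] at hsin
    have hrhs : -(4/(n:ℂ))*W κ - (4/(n:ℂ)^2)*(W κ)^2
        = 4*(1/(1-ζ^κ)) - 4*(1/(1-ζ^κ))^2 := by
      rw [hWκ]
      field_simp
    rw [hsin, hrhs]
    field_simp
    ring
  rw [Finset.sum_congr rfl hpoint, Finset.sum_sub_distrib, ← Finset.mul_sum, ← Finset.mul_sum,
    hSA, hSB]
  field_simp
  ring

lemma sum_csc_sq (n : ℕ) (hn : 2 ≤ n) :
    ∑ κ ∈ Finset.Ico 1 n, 1 / Real.sin (κ * Real.pi / n) ^ 2 = ((n:ℝ)^2 - 1) / 3 := by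
  have h := sum_csc_sq_complex n hn
  apply Complex.ofReal_injective
  push_cast [Complex.ofReal_sin]
  convert h using 2

/-- The coefficients of the `p`-adic shift invariant kernel of the anchored
Sobolev space: `r p γ 0 = 1 + γ/3` and for `k ≥ 1` with `a` base-`p` digits and
most significant digit `κ`, `r p γ k = γ/(2 p^(2a)) (1/sin²(κπ/p) - 1/3)`. -/
noncomputable def rCoeff (p : ℕ) (γ : ℝ) (k : ℕ) : ℝ :=
  if k = 0 then 1 + γ / 3
  else
    γ / (2 * (p : ℝ) ^ (2 * (Nat.log p k + 1))) *
      (1 / (Real.sin ((k / p ^ Nat.log p k : ℕ) * Real.pi / p)) ^ 2 - 1 / 3)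

lemma block_sum (p : ℕ) (hp : p.Prime) (γ : ℝ) (a : ℕ) :
    ∑ k ∈ Finset.Ico (p^a) (p^(a+1)), rCoeff p γ k
      = γ * ((p:ℝ) - 1) / (6 * (p:ℝ)^(a+1)) := by
  have hp1 : 1 < p := hp.one_lt
  have hpa : 0 < p ^ a := pow_pos hp.pos a
  set g : ℕ → ℝ := fun κ =>
    γ / (2 * (p : ℝ) ^ (2 * (a + 1))) * (1 / (Real.sin (κ * Real.pi / p)) ^ 2 - 1 / 3) with hg
  have hterm : ∀ k ∈ Finset.Ico (p^a) (p^(a+1)), rCoeff p γ k = g (k / p^a) := by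
    intro k hk
    obtain ⟨hk1, hk2⟩ := Finset.mem_Ico.mp hk
    have hlog : Nat.log p k = a := Nat.log_eq_of_pow_le_of_lt_pow hk1 hk2
    rw [rCoeff, if_neg (by omega : ¬ k = 0), hlog, hg]
  rw [Finset.sum_congr rfl hterm]
  have hre : ∑ k ∈ Finset.Ico (p^a) (p^(a+1)), g (k / p^a)
      = ∑ x ∈ Finset.Ico 1 p ×ˢ Finset.range (p^a), g x.1 := by
    apply Finset.sum_nbij' (fun k => (k / p^a, k % p^a)) (fun x => x.1 * p^a + x.2)
    · intro k hk
      obtain ⟨hk1, hk2⟩ := Finset.mem_Ico.mp hk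
      simp only [Finset.mem_product, Finset.mem_Ico, Finset.mem_range]
      refine ⟨⟨(Nat.one_le_div_iff hpa).mpr hk1, ?_⟩, Nat.mod_lt _ hpa⟩
      rw [Nat.div_lt_iff_lt_mul hpa]
      rw [pow_succ] at hk2
      rw [mul_comm]
      exact hk2
    · intro x hx
      simp only [Finset.mem_product, Finset.mem_Ico, Finset.mem_range] at hx
      obtain ⟨⟨h1, h2⟩, h3⟩ := hx
      rw [Finset.mem_Ico]
      have hle := Nat.mul_le_mul_right (p^a) h1
      have hlt := Nat.mul_le_mul_right (p^a) (by omega : x.1 + 1 ≤ p)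
      rw [pow_succ, mul_comm (p^a) p]
      constructor
      · omega
      · have : (x.1 + 1) * p^a = x.1 * p^a + p^a := by ring
        omega
    · intro k _
      exact Nat.div_add_mod' k (p^a)
    · intro x hx
      simp only [Finset.mem_product, Finset.mem_Ico, Finset.mem_range] at hx
      obtain ⟨⟨h1, h2⟩, h3⟩ := hx
      have hd : (x.1 * p^a + x.2) / p^a = x.1 := by
        rw [mul_comm, Nat.mul_add_div hpa, Nat.div_eq_of_lt h3, add_zero]
      have hm : (x.1 * p^a + x.2) % p^a = x.2 := by
        rw [mul_comm, Nat.mul_add_mod, Nat.mod_eq_of_lt h3]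
      exact Prod.ext hd hm
    · intro k _
      rfl
  rw [hre, Finset.sum_product]
  simp only [Finset.sum_const, Finset.card_range, nsmul_eq_mul, ← Finset.mul_sum]
  have hsum : ∑ κ ∈ Finset.Ico 1 p, g κ
      = γ / (2 * (p : ℝ) ^ (2 * (a + 1))) * (((p:ℝ)^2 - 1)/3 - ((p:ℝ)-1)/3) := by
    rw [hg, ← Finset.mul_sum]
    congr 1
    rw [Finset.sum_sub_distrib, sum_csc_sq p hp.two_le, Finset.sum_const, Nat.card_Ico,
      nsmul_eq_mul, Nat.cast_sub hp.one_le, Nat.cast_one]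
    ring
  rw [hsum]
  have hp0 : (0:ℝ) < p := by exact_mod_cast hp.pos
  have h2a : (p:ℝ) ^ (2*(a+1)) = (p:ℝ)^(a+1) * (p:ℝ)^(a+1) := by rw [two_mul, pow_add]
  have hsucc : (p:ℝ)^(a+1) = (p:ℝ)^a * p := pow_succ _ _
  push_cast
  rw [h2a, hsucc]
  field_simp
  ring

lemma rCoeff_nonneg (p : ℕ) (hp : p.Prime) (γ : ℝ) (hγ : 0 < γ) (k : ℕ) :
    0 ≤ rCoeff p γ k := by
  rw [rCoeff]
  split
  · positivity
  · rename_i hk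
    have hk1 : 1 ≤ k := Nat.one_le_iff_ne_zero.mpr hk
    apply mul_nonneg (by positivity)
    -- 1/sin^2 ≥ 1 ≥ 1/3
    set κ := k / p ^ Nat.log p k with hκ
    have hκ1 : 1 ≤ κ := (Nat.one_le_div_iff (pow_pos hp.pos _)).mpr (Nat.pow_log_le_self p (by omega))
    have hκp : κ < p := Nat.div_lt_iff_lt_mul (pow_pos hp.pos _) |>.mpr
      (by rw [mul_comm, ← pow_succ]; exact Nat.lt_pow_succ_log_self hp.one_lt k)
    have hpR : (0:ℝ) < p := by exact_mod_cast hp.pos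
    have hθpos : 0 < (κ:ℝ) * Real.pi / p := by
      have hκ0 : (0:ℝ) < κ := by exact_mod_cast hκ1
      exact div_pos (mul_pos hκ0 Real.pi_pos) hpR
    have hθlt : (κ:ℝ) * Real.pi / p < Real.pi := by
      rw [div_lt_iff₀ hpR]
      have hκp' : (κ:ℝ) < p := by exact_mod_cast hκp
      nlinarith [Real.pi_pos]
    have hs : 0 < Real.sin ((κ:ℝ) * Real.pi / p) := Real.sin_pos_of_pos_of_lt_pi hθpos hθlt
    have hs1 : Real.sin ((κ:ℝ) * Real.pi / p) ≤ 1 := Real.sin_le_one _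
    have h1 : 1 ≤ 1 / Real.sin ((κ:ℝ) * Real.pi / p) ^ 2 := by
      rw [le_one_div (by positivity) (by positivity)]
      nlinarith
    linarith

lemma partial_sum_eq (p : ℕ) (hp : p.Prime) (γ : ℝ) (N : ℕ) :
    ∑ k ∈ Finset.range (p^N), rCoeff p γ k
      = 1 + γ/3 + ∑ a ∈ Finset.range N, γ * ((p:ℝ) - 1) / (6 * (p:ℝ)^(a+1)) := by
  induction N with
  | zero =>
    simp [rCoeff]
  | succ N ih =>
    have hle : p^N ≤ p^(N+1) := Nat.pow_le_pow_right hp.pos (by omega)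
    rw [Finset.range_eq_Ico, ← Finset.sum_Ico_consecutive _ (Nat.zero_le _) hle,
      ← Finset.range_eq_Ico, ih, block_sum p hp γ N, Finset.sum_range_succ]
    ring

theorem tsum_rCoeff (p : ℕ) (hp : p.Prime) (γ : ℝ) (hγ : 0 < γ) :
    HasSum (rCoeff p γ) (1 + γ / 2) := by
  have hp0 : (0:ℝ) < p := by exact_mod_cast hp.pos
  have hp1 : (1:ℝ) < p := by exact_mod_cast hp.one_lt
  rw [hasSum_iff_tendsto_nat_of_nonneg (rCoeff_nonneg p hp γ hγ)]
  set s : ℕ → ℝ := fun n => ∑ k ∈ Finset.range n, rCoeff p γ k with hs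
  have hmono : Monotone s := fun m n h =>
    Finset.sum_le_sum_of_subset_of_nonneg (Finset.range_subset_range.mpr h)
      (fun k _ _ => rCoeff_nonneg p hp γ hγ k)
  have hφ : Tendsto (fun N => p ^ N) atTop atTop :=
    tendsto_pow_atTop_atTop_of_one_lt hp.one_lt
  -- the subsequence limit
  have hgeo : HasSum (fun a : ℕ => γ * ((p:ℝ) - 1) / (6 * (p:ℝ)^(a+1))) (γ/6) := by
    have h1 : HasSum (fun a : ℕ => (1/(p:ℝ))^a) (1 - 1/(p:ℝ))⁻¹ :=
      hasSum_geometric_of_lt_one (by positivity) (by rw [div_lt_one hp0]; exact hp1)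
    have h2 := h1.mul_left (γ * ((p:ℝ) - 1) / (6 * p))
    have he : ∀ a : ℕ, γ * ((p:ℝ) - 1) / (6 * p) * (1/(p:ℝ))^a
        = γ * ((p:ℝ) - 1) / (6 * (p:ℝ)^(a+1)) := by
      intro a
      rw [div_pow, one_pow, div_mul_div_comm, mul_one, pow_succ]
      congr 1
      ring
    rw [funext he] at h2
    convert h2 using 1
    · rfl
    have hinv : (1 - 1/(p:ℝ))⁻¹ = p/(p-1) := by
      rw [one_sub_div hp0.ne', inv_div]
    have hpm : (p:ℝ) - 1 ≠ 0 := by linarith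
    rw [hinv]
    field_simp
  have hsub : Tendsto (fun N => s (p ^ N)) atTop (𝓝 (1 + γ/2)) := by
    have h := hgeo.tendsto_sum_nat
    have heq : ∀ N, s (p ^ N) = 1 + γ/3 + ∑ a ∈ Finset.range N,
        γ * ((p:ℝ) - 1) / (6 * (p:ℝ)^(a+1)) := fun N => partial_sum_eq p hp γ N
    rw [funext heq]
    have := (tendsto_const_nhds (x := 1 + γ/3) (f := atTop (α := ℕ))).add h
    convert this using 2
    ring
  rcases tendsto_of_monotone hmono with hTop | ⟨l, hl⟩
  · exact absurd (hTop.comp hφ) (not_tendsto_atTop_of_tendsto_nhds hsub)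
  · have : l = 1 + γ/2 := tendsto_nhds_unique (hl.comp hφ) hsub
    rwa [this] at hl
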